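/- A subset of ℝ is bounded if and only if it is both statistically upward compact and statistically downward compact. -/

import Mathlib

def StatUpQC (x : ℕ → ℝ) : Prop :=
  ∀ ε > (0:ℝ), Filter.Tendsto
    (fun n => (((Finset.range n).filter (fun k => ε ≤ x k - x (k+1))).card : ℝ) / n)
    Filter.atTop (nhds 0)

def StatDownQC (x : ℕ → ℝ) : Prop :=
  ∀ ε > (0:ℝ), Filter.Tendsto
    (fun n => (((Finset.range n).filter (fun k => ε ≤ x (k+1) - x k)).card : ℝ) / n)
    Filter.atTop (nhds 0)

def StatUpCompact (E : Set ℝ) : Prop :=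
  ∀ x : ℕ → ℝ, (∀ n, x n ∈ E) → ∃ φ : ℕ → ℕ, StrictMono φ ∧ StatUpQC (x ∘ φ)

def StatDownCompact (E : Set ℝ) : Prop :=
  ∀ x : ℕ → ℝ, (∀ n, x n ∈ E) → ∃ φ : ℕ → ℕ, StrictMono φ ∧ StatDownQC (x ∘ φ)

open Filter Finset

lemma density_zero_of_eventually {P : ℕ → Prop} [DecidablePred P]
    (h : ∀ᶠ k in atTop, ¬ P k) :
    Tendsto (fun n => ((((Finset.range n).filter P).card : ℝ)) / n) atTop (nhds 0) := by
  obtain ⟨N, hN⟩ := eventually_atTop.1 h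
  have hb : ∀ n : ℕ, (((Finset.range n).filter P).card : ℝ) ≤ N := by
    intro n
    have : ((Finset.range n).filter P).card ≤ (Finset.range N).card := by
      apply Finset.card_le_card
      intro k hk
      simp only [Finset.mem_filter, Finset.mem_range] at hk ⊢
      by_contra hkN
      exact (hN k (le_of_not_gt hkN)) hk.2
    simpa using (Nat.cast_le (α := ℝ)).2 (this.trans_eq (Finset.card_range N))
  apply squeeze_zero (fun n => by positivity) (fun n => ?_)
    (tendsto_const_div_atTop_nhds_zero_nat (N : ℝ))
  rcases Nat.eq_zero_or_pos n with h0 | h0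
  · simp [h0]
  · exact (div_le_div_iff_of_pos_right (by exact_mod_cast h0)).2 (hb n)

lemma not_statQC_of_gap {d : ℕ → ℝ} (h : ∀ k, (1:ℝ) ≤ d k) :
    ¬ Tendsto (fun n => (((Finset.range n).filter (fun k => (1:ℝ) ≤ d k)).card : ℝ) / n)
      atTop (nhds 0) := by
  intro hT
  have heq : ∀ᶠ n in atTop,
      (((Finset.range n).filter (fun k => (1:ℝ) ≤ d k)).card : ℝ) / n = 1 := by
    filter_upwards [eventually_gt_atTop 0] with n hn
    have : (Finset.range n).filter (fun k => (1:ℝ) ≤ d k) = Finset.range n := by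
      apply Finset.filter_true_of_mem
      intro k _; exact h k
    rw [this, Finset.card_range, div_self]
    exact_mod_cast hn.ne'
  have : Tendsto (fun _ : ℕ => (1:ℝ)) atTop (nhds 0) := hT.congr' heq
  simpa using tendsto_nhds_unique this tendsto_const_nhds

theorem bounded_iff_statUpDownCompact (E : Set ℝ) :
    (BddAbove E ∧ BddBelow E) ↔ (StatUpCompact E ∧ StatDownCompact E) := by
  constructor
  · rintro ⟨hA, hB⟩
    have hbd : Bornology.IsBounded E := isBounded_iff_bddBelow_bddAbove.2 ⟨hB, hA⟩
    have key : ∀ x : ℕ → ℝ, (∀ n, x n ∈ E) → ∃ φ : ℕ → ℕ, StrictMono φ ∧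
        Tendsto (fun k => (x ∘ φ) (k+1) - (x ∘ φ) k) atTop (nhds 0) := by
      intro x hx
      obtain ⟨a, _, φ, hφ, hconv⟩ := tendsto_subseq_of_bounded hbd hx
      refine ⟨φ, hφ, ?_⟩
      have h2 : Tendsto (fun k => (x ∘ φ) (k+1)) atTop (nhds a) :=
        hconv.comp (tendsto_add_atTop_nat 1)
      simpa using h2.sub hconv
    constructor
    · intro x hx
      obtain ⟨φ, hφ, hd⟩ := key x hx
      refine ⟨φ, hφ, ?_⟩
      intro ε hε
      apply density_zero_of_eventually
      have hd' : Tendsto (fun k => (x ∘ φ) k - (x ∘ φ) (k+1)) atTop (nhds 0) := by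
        have := hd.neg
        simpa [neg_sub] using this
      have : ∀ᶠ k in atTop, (x ∘ φ) k - (x ∘ φ) (k+1) < ε :=
        hd'.eventually (eventually_lt_nhds hε)
      filter_upwards [this] with k hk
      exact not_le.2 hk
    · intro x hx
      obtain ⟨φ, hφ, hd⟩ := key x hx
      refine ⟨φ, hφ, ?_⟩
      intro ε hε
      apply density_zero_of_eventually
      filter_upwards [hd.eventually (eventually_lt_nhds hε)] with k hk
      exact not_le.2 hk
  · rintro ⟨hup, hdown⟩
    constructor
    · by_contra hA
      have h : ∀ b : ℝ, ∃ y, y ∈ E ∧ b < y := by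
        intro b; by_contra hb; push_neg at hb
        exact hA ⟨b, fun y hy => hb y hy⟩
      choose f hf hgt using h
      set x : ℕ → ℝ := fun n => Nat.rec (f 0) (fun _ xn => f (xn + 1)) n with hxdef
      have hxE : ∀ n, x n ∈ E := by
        intro n; cases n with
        | zero => exact hf 0
        | succ m => exact hf _
      have hstep : ∀ n, x n + 1 ≤ x (n+1) := fun n => (hgt (x n + 1)).le
      have hmono : Monotone x :=
        monotone_nat_of_le_succ fun n => le_trans (by linarith) (hstep n)
      have hgap : ∀ m n : ℕ, m < n → (1:ℝ) ≤ x n - x m := by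
        intro m n hmn
        have := hstep m
        have h2 : x (m+1) ≤ x n := hmono hmn
        linarith
      obtain ⟨φ, hφ, hq⟩ := hdown x hxE
      exact not_statQC_of_gap (d := fun k => (x ∘ φ) (k+1) - (x ∘ φ) k)
        (fun k => hgap _ _ (hφ (Nat.lt_succ_self k))) (hq 1 one_pos)
    · by_contra hB
      have h : ∀ b : ℝ, ∃ y, y ∈ E ∧ y < b := by
        intro b; by_contra hb; push_neg at hb
        exact hB ⟨b, fun y hy => hb y hy⟩
      choose f hf hlt using h
      set x : ℕ → ℝ := fun n => Nat.rec (f 0) (fun _ xn => f (xn - 1)) n with hxdef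
      have hxE : ∀ n, x n ∈ E := by
        intro n; cases n with
        | zero => exact hf 0
        | succ m => exact hf _
      have hstep : ∀ n, x (n+1) ≤ x n - 1 := fun n => (hlt (x n - 1)).le
      have hanti : Antitone x :=
        antitone_nat_of_succ_le fun n => le_trans (hstep n) (by linarith)
      have hgap : ∀ m n : ℕ, m < n → (1:ℝ) ≤ x m - x n := by
        intro m n hmn
        have := hstep m
        have h2 : x n ≤ x (m+1) := hanti hmn
        linarith
      obtain ⟨φ, hφ, hq⟩ := hup x hxE
      exact not_statQC_of_gap (d := fun k => (x ∘ φ) k - (x ∘ φ) (k+1))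
        (fun k => hgap _ _ (hφ (Nat.lt_succ_self k))) (hq 1 one_pos)
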